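/- (Lemma 2.2) Set ρ(x) = u(x)v(x). Then there is a unique x₀ ∈ ℝ with u(x₀) = v(x₀), and for all x ∈ ℝ: v(x) = √(ρ(x))·exp((1/2)·∫_{x₀}^x dt/ρ(t)) and u(x) = √(ρ(x))·exp(−(1/2)·∫_{x₀}^x dt/ρ(t)); moreover ρ is differentiable and |ρ'(x)| < 1 for all x ∈ ℝ. -/

import Mathlib

open MeasureTheory Filter Real Set
open scoped ENNReal

noncomputable section

/-- Condition (1.5): for every `a > 0`, `∫_{x-a}^{x+a} q(t) dt → ∞` as `|x| → ∞`. -/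
def Cond15 (q : ℝ → ℝ) : Prop :=
  ∀ a : ℝ, 0 < a → Tendsto (fun x => ∫ t in (x - a)..(x + a), q t) (cocompact ℝ) atTop

/-- `(u, v)` is a principal fundamental system of solutions (PFSS) of `z'' = q z`.
Local absolute continuity of `u'` together with `u'' = q u` a.e. is encoded via the
fundamental theorem of calculus: `u' b - u' a = ∫_a^b q t * u t dt` for all `a, b`. -/
def IsPFSS (q u v : ℝ → ℝ) : Prop :=
  ContDiff ℝ 1 u ∧ ContDiff ℝ 1 v ∧
  (∀ a b : ℝ, deriv u b - deriv u a = ∫ t in a..b, q t * u t) ∧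
  (∀ a b : ℝ, deriv v b - deriv v a = ∫ t in a..b, q t * v t) ∧
  (∀ x, 0 < u x) ∧ (∀ x, 0 < v x) ∧
  (∀ x, deriv u x < 0) ∧ (∀ x, 0 < deriv v x) ∧
  (∀ x, deriv v x * u x - deriv u x * v x = 1) ∧
  (∀ x, u x = v x * ∫ t in Set.Ioi x, ((v t) ^ 2)⁻¹) ∧
  Tendsto u atTop (nhds 0) ∧ Tendsto (deriv u) atTop (nhds 0) ∧
  Tendsto v atTop atTop ∧ Tendsto (deriv v) atTop atTop ∧
  Tendsto v atBot (nhds 0) ∧ Tendsto (deriv v) atBot (nhds 0) ∧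
  Tendsto u atBot atTop ∧ Tendsto (fun x => |deriv u x|) atBot atTop

/-- The Green function: `G(x,t) = u(x) v(t)` for `x ≥ t`, `G(x,t) = u(t) v(x)` for `x ≤ t`. -/
def GreenFn (u v : ℝ → ℝ) (x t : ℝ) : ℝ := if x ≤ t then u t * v x else u x * v t

/-- The Green operator `(Gf)(x) = ∫_ℝ G(x,t) f(t) dt`. -/
def GreenOp (u v f : ℝ → ℝ) (x : ℝ) : ℝ := ∫ t, GreenFn u v x t * f t
/-- Lemma 2.2: with `ρ = u v`, there is a unique `x₀` with `u x₀ = v x₀`, and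
`v x = √(ρ x) exp((1/2)∫_{x₀}^x dt/ρ(t))`, `u x = √(ρ x) exp(-(1/2)∫_{x₀}^x dt/ρ(t))`;
moreover `ρ` is differentiable and `|ρ'(x)| < 1` for all `x`. -/
theorem lemma_2_2 (q u v : ℝ → ℝ) (hq_loc : LocallyIntegrable q) (hq : ∀ x, 1 ≤ q x)
    (huv : IsPFSS q u v) :
    ∃ x₀ : ℝ, u x₀ = v x₀ ∧ (∀ x' : ℝ, u x' = v x' → x' = x₀) ∧
      (∀ x : ℝ, v x = Real.sqrt (u x * v x) *
        Real.exp ((1 / 2) * ∫ t in x₀..x, (u t * v t)⁻¹)) ∧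
      (∀ x : ℝ, u x = Real.sqrt (u x * v x) *
        Real.exp (-((1 / 2) * ∫ t in x₀..x, (u t * v t)⁻¹))) ∧
      (∀ x : ℝ, DifferentiableAt ℝ (fun s => u s * v s) x) ∧
      (∀ x : ℝ, |deriv (fun s => u s * v s) x| < 1) := by

  obtain ⟨hu, hv, -, -, hupos, hvpos, hu', hv', hW, -, hu_top, -, hv_top, -, hv_bot, -, hu_bot, -⟩ := huv
  have hud : Differentiable ℝ u := hu.differentiable one_ne_zero
  have hvd : Differentiable ℝ v := hv.differentiable one_ne_zero
  have huc : Continuous u := hu.continuous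
  have hvc : Continuous v := hv.continuous
  -- f = u - v is strictly decreasing
  have hfderiv : ∀ x, deriv (fun y => u y - v y) x < 0 := by
    intro x
    rw [deriv_fun_sub (hud x) (hvd x)]
    have := hu' x; have := hv' x; linarith
  have hfanti : StrictAnti (fun y => u y - v y) := by
    apply strictAnti_of_deriv_neg hfderiv
  -- f surjective (tends to atTop at atBot and atBot at atTop)
  have hf_bot : Tendsto (fun y => u y - v y) atBot atTop := by
    have : Tendsto (fun y => -v y) atBot (nhds (-0)) := hv_bot.neg
    simpa [sub_eq_add_neg] using hu_bot.atTop_add (by simpa using this)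
  have hf_top : Tendsto (fun y => u y - v y) atTop atBot := by
    have : Tendsto (fun y => -v y) atTop atBot := tendsto_neg_atBot_iff.mpr hv_top
    simpa [sub_eq_add_neg] using hu_top.add_atBot this
  obtain ⟨x₀, hx₀⟩ : ∃ x₀, u x₀ - v x₀ = 0 := by
    have hsurj : Function.Surjective (fun y => u y - v y) :=
      Continuous.surjective' (huc.sub hvc) hf_bot hf_top
    exact hsurj 0
  have hx₀eq : u x₀ = v x₀ := by linarith
  -- the derivative of log (v/u)
  have hh : ∀ x, HasDerivAt (fun y => Real.log (v y / u y)) ((u x * v x)⁻¹) x := by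
    intro x
    have hdiv : HasDerivAt (fun y => v y / u y)
        ((deriv v x * u x - v x * deriv u x) / u x ^ 2) x :=
      ((hvd x).hasDerivAt).div ((hud x).hasDerivAt) (hupos x).ne'
    have hu0 : u x ≠ 0 := (hupos x).ne'
    have hv0 : v x ≠ 0 := (hvpos x).ne'
    have hne : v x / u x ≠ 0 := div_ne_zero hv0 hu0
    have := hdiv.log hne
    have e : ((deriv v x * u x - v x * deriv u x) / u x ^ 2) / (v x / u x)
        = (u x * v x)⁻¹ := by
      have h1 : deriv v x * u x - v x * deriv u x = 1 := by
        have := hW x; have := mul_comm (v x) (deriv u x); linarith [mul_comm (v x) (deriv u x)]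
      rw [h1]
      field_simp
    rwa [e] at this
  have hcont : Continuous (fun t => (u t * v t)⁻¹) :=
    (huc.mul hvc).inv₀ (fun x => (mul_pos (hupos x) (hvpos x)).ne')
  have hint : ∀ x, (∫ t in x₀..x, (u t * v t)⁻¹) = Real.log (v x / u x) := by
    intro x
    have := intervalIntegral.integral_eq_sub_of_hasDerivAt
      (f := fun y => Real.log (v y / u y)) (f' := fun t => (u t * v t)⁻¹)
      (a := x₀) (b := x) (fun t _ => hh t) (hcont.intervalIntegrable x₀ x)
    have e2 : Real.log (v x₀ / u x₀) = 0 := by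
      rw [hx₀eq, div_self (hvpos x₀).ne', Real.log_one]
    rw [this]
    simp only [e2, sub_zero]
  have hexp : ∀ x, Real.exp ((1 / 2) * Real.log (v x / u x)) = Real.sqrt (v x / u x) := by
    intro x
    have hpos : 0 < v x / u x := div_pos (hvpos x) (hupos x)
    rw [Real.sqrt_eq_rpow, Real.rpow_def_of_pos hpos, mul_comm]
  refine ⟨x₀, hx₀eq, ?_, ?_, ?_, ?_, ?_⟩
  · intro x' hx'
    by_contra hne
    rcases lt_or_gt_of_ne hne with h | h
    · have := hfanti h
      simp only at this
      rw [hx', hx₀eq] at this; linarith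
    · have := hfanti h
      simp only at this
      rw [hx', hx₀eq] at this; linarith
  · intro x
    rw [hint x, hexp x, ← Real.sqrt_mul (mul_pos (hupos x) (hvpos x)).le]
    have hu0 : u x ≠ 0 := (hupos x).ne'
    have : u x * v x * (v x / u x) = v x ^ 2 := by
      field_simp
    rw [this, Real.sqrt_sq (hvpos x).le]
  · intro x
    rw [hint x]
    have hlog : -((1 / 2) * Real.log (v x / u x)) = (1 / 2) * Real.log (u x / v x) := by
      rw [show u x / v x = (v x / u x)⁻¹ by rw [inv_div], Real.log_inv]
      ring
    rw [hlog]
    have hpos : 0 < u x / v x := div_pos (hupos x) (hvpos x)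
    have hexp2 : Real.exp ((1 / 2) * Real.log (u x / v x)) = Real.sqrt (u x / v x) := by
      rw [Real.sqrt_eq_rpow, Real.rpow_def_of_pos hpos, mul_comm]
    rw [hexp2, ← Real.sqrt_mul (mul_pos (hupos x) (hvpos x)).le]
    have hv0 : v x ≠ 0 := (hvpos x).ne'
    have : u x * v x * (u x / v x) = u x ^ 2 := by
      field_simp
    rw [this, Real.sqrt_sq (hupos x).le]
  · intro x
    exact (hud x).mul (hvd x)
  · intro x
    rw [deriv_fun_mul (hud x) (hvd x)]
    have h1 : deriv u x * v x < 0 := mul_neg_of_neg_of_pos (hu' x) (hvpos x)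
    have h2 : 0 < u x * deriv v x := mul_pos (hupos x) (hv' x)
    have h3 := hW x
    have h4 : u x * deriv v x = deriv v x * u x := mul_comm _ _
    rw [abs_lt]
    constructor <;> linarith
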